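/- For each real number λ in (0,1) and each integer n ≥ 1, there exists a Lebesgue measurable subset S of ℝⁿ such that the n-dimensional Lebesgue measure of S ∩ Q is at least λ for every axis-parallel cube Q of unit side length (i.e., every set of the form ∏_{i=1}^n [a_i, a_i + 1]), but there is no x ∈ S and no nonzero vector Δ ∈ ℝⁿ such that x + kΔ ∈ S for all natural numbers k. -/

import Mathlib

open MeasureTheory

/-- Orbit of an irrational rotation (over ℕ) hits every ε-neighborhood of ℤ. -/
lemma hit_int (θ : ℝ) (hθ : Irrational θ) (γ : ℝ) {ε : ℝ} (hε : 0 < ε) :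
    ∃ (k : ℕ) (j : ℤ), |γ + k * θ - j| < ε := by
  obtain ⟨N, hN⟩ := exists_nat_gt (1/ε)
  have hNpos : 0 < N := by
    by_contra h
    push_neg at h
    interval_cases N
    have := one_div_pos.2 hε
    linarith
  obtain ⟨p, q, hq0, hqN, habs⟩ := Real.exists_int_int_abs_mul_sub_le θ hNpos
  set s : ℝ := q * θ - p with hs
  have hsε : |s| < ε := by
    have h1 : (1:ℝ)/(N+1) < ε := by
      rw [div_lt_iff₀ (by positivity)]
      rw [div_lt_iff₀ hε] at hN
      nlinarith
    linarith [habs]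
  have hsε' := abs_lt.mp hsε
  have hs0 : s ≠ 0 := by
    intro h
    have hq : (q:ℝ) ≠ 0 := by exact_mod_cast hq0.ne'
    have : θ = (p : ℝ) / (q : ℝ) := by
      field_simp
      linarith [h, hs]
    exact hθ ⟨(p : ℚ) / (q : ℚ), by push_cast; rw [this]⟩
  have hqR : ((q.toNat : ℕ) : ℝ) = (q : ℝ) := by
    exact_mod_cast congrArg Int.cast (Int.toNat_of_nonneg hq0.le)
  rcases hs0.lt_or_gt with hneg | hpos
  · -- s < 0 : land just below ⌊γ⌋
    set t : ℝ := (γ - ⌊γ⌋) / (-s) with htdef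
    have hts : t * (-s) = γ - ⌊γ⌋ := div_mul_cancel₀ _ (by linarith)
    have ht0 : 0 ≤ t := div_nonneg (by linarith [Int.floor_le γ]) (by linarith)
    set m : ℕ := ⌈t⌉₊ with hmdef
    have hm1 : t ≤ m := Nat.le_ceil t
    have hm2 : (m:ℝ) < t + 1 := Nat.ceil_lt_add_one ht0
    have hA : γ - ⌊γ⌋ ≤ (m:ℝ) * (-s) := by
      calc γ - ⌊γ⌋ = t * (-s) := hts.symm
        _ ≤ (m:ℝ) * (-s) := mul_le_mul_of_nonneg_right hm1 (by linarith)
    have hB : (m:ℝ) * (-s) < (γ - ⌊γ⌋) + (-s) := by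
      have h1 : (m:ℝ) * (-s) < (t+1) * (-s) :=
        mul_lt_mul_of_pos_right hm2 (by linarith)
      have h2 : (t+1) * (-s) = t * (-s) + (-s) := by ring
      linarith [hts]
    refine ⟨m * q.toNat, m * p + ⌊γ⌋, ?_⟩
    have key : γ + (↑(m * q.toNat)) * θ - ↑(m * p + ⌊γ⌋) = γ - ⌊γ⌋ + m * s := by
      push_cast [hqR]
      ring
    rw [key, abs_lt]
    constructor <;> linarith
  · -- s > 0 : land just above ⌈γ⌉
    set t : ℝ := ((⌈γ⌉ : ℝ) - γ) / s with htdef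
    have hts : t * s = (⌈γ⌉ : ℝ) - γ := div_mul_cancel₀ _ (by linarith)
    have ht0 : 0 ≤ t := div_nonneg (by linarith [Int.le_ceil γ]) hpos.le
    set m : ℕ := ⌈t⌉₊ with hmdef
    have hm1 : t ≤ m := Nat.le_ceil t
    have hm2 : (m:ℝ) < t + 1 := Nat.ceil_lt_add_one ht0
    have hA : (⌈γ⌉ : ℝ) - γ ≤ (m:ℝ) * s := by
      calc (⌈γ⌉ : ℝ) - γ = t * s := hts.symm
        _ ≤ (m:ℝ) * s := mul_le_mul_of_nonneg_right hm1 hpos.le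
    have hB : (m:ℝ) * s < ((⌈γ⌉ : ℝ) - γ) + s := by
      have h1 : (m:ℝ) * s < (t+1) * s := mul_lt_mul_of_pos_right hm2 hpos
      have h2 : (t+1) * s = t * s + s := by ring
      linarith [hts]
    refine ⟨m * q.toNat, m * p + ⌈γ⌉, ?_⟩
    have key : γ + (↑(m * q.toNat)) * θ - ↑(m * p + ⌈γ⌉) = γ - ⌈γ⌉ + m * s := by
      push_cast [hqR]
      ring
    rw [key, abs_lt]
    constructor <;> linarith

/-- The "band" around integer multiples of `α`. -/
def apBand (α δ : ℝ) : Set ℝ := ⋃ j : ℤ, Metric.ball ((j:ℝ) * α) δ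

lemma apBand_volume {α δ : ℝ} (hα : 1 ≤ α) (hδ : 0 < δ) (hδ2 : δ ≤ 1/2) (a : ℝ) :
    volume (apBand α δ ∩ Set.Icc a (a+1)) ≤ ENNReal.ofReal (6*δ) := by
  have hα0 : (0:ℝ) < α := by linarith
  set l : ℤ := ⌈(a - δ)/α⌉ with hl
  have hsub : apBand α δ ∩ Set.Icc a (a+1) ⊆
      ⋃ j ∈ Finset.Icc l (l+2), Metric.ball ((j:ℝ) * α) δ := by
    rintro y ⟨hy1, hy2, hy3⟩
    rw [apBand, Set.mem_iUnion] at hy1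
    obtain ⟨j, hj⟩ := hy1
    rw [Metric.mem_ball, Real.dist_eq, abs_lt] at hj
    have hjl : l ≤ j := by
      rw [hl, Int.ceil_le]
      rw [div_le_iff₀ hα0]
      nlinarith [hj.1, hj.2]
    have hju : j ≤ l + 2 := by
      have h1 : ((a - δ)/α : ℝ) ≤ l := Int.le_ceil _
      have h2 : (j:ℝ) * α < a + 1 + δ := by nlinarith [hj.1, hj.2]
      have h3 : (j:ℝ) < (a + 1 + δ)/α := by
        rw [lt_div_iff₀ hα0]; linarith
      have h4 : (a + 1 + δ)/α ≤ (a - δ)/α + 2 := by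
        rw [div_add' _ _ _ hα0.ne', div_le_div_iff_of_pos_right hα0]
        nlinarith
      have : (j:ℝ) < (l:ℝ) + 2 := by linarith
      exact_mod_cast le_of_lt (by exact_mod_cast this : j < l + 2)
    rw [Set.mem_iUnion₂]
    exact ⟨j, Finset.mem_Icc.mpr ⟨hjl, hju⟩, Metric.mem_ball.mpr
      (by rw [Real.dist_eq, abs_lt]; exact hj)⟩
  calc volume (apBand α δ ∩ Set.Icc a (a+1))
      ≤ volume (⋃ j ∈ Finset.Icc l (l+2), Metric.ball ((j:ℝ) * α) δ) := measure_mono hsub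
    _ ≤ ∑ j ∈ Finset.Icc l (l+2), volume (Metric.ball ((j:ℝ) * α) δ) :=
        measure_biUnion_finset_le _ _
    _ = ∑ j ∈ Finset.Icc l (l+2), ENNReal.ofReal (2*δ) := by
        simp [Real.volume_ball]
    _ = 3 * ENNReal.ofReal (2*δ) := by
        rw [Finset.sum_const]
        have : (Finset.Icc l (l+2)).card = 3 := by
          rw [Int.card_Icc]; omega
        rw [this]; simp [mul_comm]
    _ = ENNReal.ofReal (6*δ) := by
        rw [show (6:ℝ)*δ = 3*(2*δ) by ring,
          ENNReal.ofReal_mul (by norm_num : (0:ℝ) ≤ 3),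
          ENNReal.ofReal_mul (by norm_num : (0:ℝ) ≤ 2)]
        norm_num

/-- The set of "holes": bands around multiples of `1` and of `√2`. -/
def apHoles (δ : ℝ) : Set ℝ := apBand 1 δ ∪ apBand (Real.sqrt 2) δ

lemma apHoles_isOpen (δ : ℝ) : IsOpen (apHoles δ) :=
  ((isOpen_iUnion fun _ => Metric.isOpen_ball).union
    (isOpen_iUnion fun _ => Metric.isOpen_ball))

lemma one_le_sqrt_two : (1:ℝ) ≤ Real.sqrt 2 := by
  nlinarith [Real.sq_sqrt (by norm_num : (0:ℝ) ≤ 2), Real.sqrt_nonneg 2]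

lemma apHoles_compl_volume {δ : ℝ} (hδ : 0 < δ) (hδ2 : δ ≤ 1/2) (a : ℝ) :
    ENNReal.ofReal (1 - 12*δ) ≤ volume ((apHoles δ)ᶜ ∩ Set.Icc a (a+1)) := by
  have hIcc : volume (Set.Icc a (a+1)) = ENNReal.ofReal 1 := by
    rw [Real.volume_Icc]; norm_num
  have hsplit : volume (Set.Icc a (a+1)) ≤
      volume ((apHoles δ)ᶜ ∩ Set.Icc a (a+1)) + volume (apHoles δ ∩ Set.Icc a (a+1)) := by
    refine le_trans (measure_mono ?_) (measure_union_le _ _)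
    intro y hy
    by_cases h : y ∈ apHoles δ
    · exact Or.inr ⟨h, hy⟩
    · exact Or.inl ⟨h, hy⟩
  have hH : volume (apHoles δ ∩ Set.Icc a (a+1)) ≤ ENNReal.ofReal (12*δ) := by
    have : apHoles δ ∩ Set.Icc a (a+1) ⊆
        (apBand 1 δ ∩ Set.Icc a (a+1)) ∪ (apBand (Real.sqrt 2) δ ∩ Set.Icc a (a+1)) := by
      rintro y ⟨h1 | h1, h2⟩
      exacts [Or.inl ⟨h1, h2⟩, Or.inr ⟨h1, h2⟩]
    refine le_trans (measure_mono this) (le_trans (measure_union_le _ _) ?_)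
    have b1 := apBand_volume le_rfl hδ hδ2 a
    have b2 := apBand_volume one_le_sqrt_two hδ hδ2 a
    calc volume (apBand 1 δ ∩ Set.Icc a (a+1)) + volume (apBand (Real.sqrt 2) δ ∩ Set.Icc a (a+1))
        ≤ ENNReal.ofReal (6*δ) + ENNReal.ofReal (6*δ) := add_le_add b1 b2
      _ = ENNReal.ofReal (12*δ) := by
          rw [← ENNReal.ofReal_add (by positivity) (by positivity)]; ring_nf
  have key : ENNReal.ofReal (1 - 12*δ) + ENNReal.ofReal (12*δ) ≤
      volume ((apHoles δ)ᶜ ∩ Set.Icc a (a+1)) + ENNReal.ofReal (12*δ) := by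
    rcases le_or_gt (1 - 12*δ) 0 with h | h
    · rw [ENNReal.ofReal_eq_zero.mpr h]
      exact add_le_add zero_le le_rfl
    · calc ENNReal.ofReal (1 - 12*δ) + ENNReal.ofReal (12*δ)
          = ENNReal.ofReal 1 := by
            rw [← ENNReal.ofReal_add (by linarith) (by positivity)]; ring_nf
        _ = volume (Set.Icc a (a+1)) := hIcc.symm
        _ ≤ _ := le_trans hsplit (add_le_add le_rfl hH)
  exact (ENNReal.add_le_add_iff_right ENNReal.ofReal_ne_top).mp key

lemma hit_scaled {α : ℝ} (hα : 0 < α) {d : ℝ} (hd : Irrational (d / α)) (c : ℝ)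
    {δ : ℝ} (hδ : 0 < δ) : ∃ (k : ℕ) (j : ℤ), |c + k * d - j * α| < δ := by
  obtain ⟨k, j, h⟩ := hit_int (d/α) hd (c/α) (div_pos hδ hα)
  refine ⟨k, j, ?_⟩
  have e : c + k*d - j*α = α * (c/α + k*(d/α) - j) := by
    field_simp
  rw [e, abs_mul, abs_of_pos hα]
  calc α * |c/α + k*(d/α) - j| < α * (δ/α) := by
        exact mul_lt_mul_of_pos_left h hα
    _ = δ := by field_simp

/-- Every infinite AP with nonzero gap hits the holes. -/
lemma ap_hits_holes {d : ℝ} (hd : d ≠ 0) (c : ℝ) {δ : ℝ} (hδ : 0 < δ) :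
    ∃ k : ℕ, c + k * d ∈ apHoles δ := by
  have sqrt2_pos : (0:ℝ) < Real.sqrt 2 := by linarith [one_le_sqrt_two]
  by_cases hirr : Irrational d
  · obtain ⟨k, j, h⟩ := hit_scaled one_pos (by rwa [div_one]) c hδ
    refine ⟨k, Or.inl ?_⟩
    rw [apBand, Set.mem_iUnion]
    exact ⟨j, by rwa [Metric.mem_ball, Real.dist_eq]⟩
  · rw [Irrational] at hirr
    push_neg at hirr
    obtain ⟨q, hq⟩ := hirr
    have hq0 : q ≠ 0 := by
      intro h; apply hd; rw [← hq, h]; norm_num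
    have hdi : Irrational (d / Real.sqrt 2) := by
      rw [div_eq_mul_inv, ← hq]
      exact (irrational_sqrt_two.inv).ratCast_mul hq0
    obtain ⟨k, j, h⟩ := hit_scaled sqrt2_pos hdi c hδ
    refine ⟨k, Or.inr ?_⟩
    rw [apBand, Set.mem_iUnion]
    exact ⟨j, by rwa [Metric.mem_ball, Real.dist_eq]⟩

/-- For each `λ ∈ (0,1)` and `n ≥ 1` there is a measurable `S ⊆ ℝⁿ` meeting every
axis-parallel unit cube in measure at least `λ`, containing no infinite arithmetic
progression with nonzero gap vector. -/
theorem stmt_6 (lam : ℝ) (hlam : lam ∈ Set.Ioo (0 : ℝ) 1) (n : ℕ) (hn : 1 ≤ n) :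
    ∃ S : Set (Fin n → ℝ), MeasurableSet S ∧
      (∀ a : Fin n → ℝ, ENNReal.ofReal lam ≤
        volume (S ∩ Set.univ.pi fun i => Set.Icc (a i) (a i + 1))) ∧
      ¬ ∃ x ∈ S, ∃ Δ : Fin n → ℝ, Δ ≠ 0 ∧ ∀ k : ℕ, x + (k : ℝ) • Δ ∈ S := by
  obtain ⟨hlam0, hlam1⟩ := hlam
  have hn0 : (0:ℝ) < n := by exact_mod_cast hn
  have hn1 : (1:ℝ) ≤ n := by exact_mod_cast hn
  set δ : ℝ := (1 - lam)/(12*n) with hδdef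
  have hδ : 0 < δ := by
    apply div_pos (by linarith) (by positivity)
  have hδ2 : δ ≤ 1/2 := by
    rw [hδdef, div_le_div_iff₀ (by positivity) (by norm_num)]
    nlinarith
  have h12 : 12*δ = (1-lam)/n := by
    rw [hδdef]; field_simp
  have h12le : 12*δ ≤ 1 - lam := by
    rw [h12, div_le_iff₀ hn0]; nlinarith
  have h0 : 0 ≤ 1 - 12*δ := by linarith
  have hpow : lam ≤ (1 - 12*δ)^n := by
    have hb := one_add_mul_le_pow (a := -((1-lam)/n)) (by
      have : (1-lam)/n ≤ 1 := by rw [div_le_one hn0]; linarith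
      linarith) n
    have hc : (n:ℝ) * ((1-lam)/n) = 1 - lam := by
      field_simp
    calc lam = 1 + (n:ℝ) * (-((1-lam)/n)) := by rw [mul_neg, hc]; ring
      _ ≤ (1 + -((1-lam)/n))^n := hb
      _ = (1 - 12*δ)^n := by rw [h12]; ring_nf
  refine ⟨Set.univ.pi fun _ : Fin n => (apHoles δ)ᶜ,
    MeasurableSet.univ_pi fun _ => (apHoles_isOpen δ).measurableSet.compl, ?_, ?_⟩
  · intro a
    rw [← Set.pi_inter_distrib, volume_pi_pi]
    calc ENNReal.ofReal lam ≤ ENNReal.ofReal ((1-12*δ)^n) := ENNReal.ofReal_le_ofReal hpow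
      _ = (ENNReal.ofReal (1-12*δ))^n := ENNReal.ofReal_pow h0 n
      _ = ∏ _i : Fin n, ENNReal.ofReal (1-12*δ) := by
          rw [Finset.prod_const, Finset.card_univ, Fintype.card_fin]
      _ ≤ ∏ i : Fin n, volume ((apHoles δ)ᶜ ∩ Set.Icc (a i) (a i + 1)) :=
          Finset.prod_le_prod' fun i _ => apHoles_compl_volume hδ hδ2 _
  · rintro ⟨x, hxS, Δ, hΔ0, hAP⟩
    obtain ⟨i, hi⟩ := Function.ne_iff.mp hΔ0
    obtain ⟨k, hk⟩ := ap_hits_holes hi (x i) hδ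
    have h1 := hAP k
    rw [Set.mem_univ_pi] at h1
    have h2 := h1 i
    simp only [Pi.add_apply, Pi.smul_apply, smul_eq_mul] at h2
    exact h2 hk
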